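/- Every key polynomial φ of a valuation μ on K[x] extending v is irreducible in K[x]. -/

import Mathlib

open Polynomial

section Preamble

variable {Λ : Type*} [AddCommGroup Λ] [LinearOrder Λ] [IsOrderedAddMonoid Λ]

/-- A (Krull) valuation on a commutative ring, written additively, with value `⊤` at `0`. -/
def IsVal {R : Type*} [CommRing R] (μ : R → WithTop Λ) : Prop :=
  μ 0 = ⊤ ∧ μ 1 = 0 ∧ (∀ a b, μ (a * b) = μ a + μ b) ∧ ∀ a b, min (μ a) (μ b) ≤ μ (a + b)

variable {K : Type*} [Field K]

/-- `μ` is a valuation on `K[x]` whose restriction to `K` is `v`. -/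
def ExtendsVal (v : K → WithTop Λ) (μ : Polynomial K → WithTop Λ) : Prop :=
  ∀ a : K, μ (Polynomial.C a) = v a

/-- `a ∼_μ b`: the initial terms of `a` and `b` in the graded algebra of `μ` coincide. -/
def MuEquiv (μ : Polynomial K → WithTop Λ) (a b : Polynomial K) : Prop :=
  (μ a = μ b ∧ μ a < μ (a - b)) ∨ (μ a = ⊤ ∧ μ b = ⊤)

/-- `h ∣_μ g` : the initial term of `h` divides the initial term of `g` in the
graded algebra `G_μ`. -/
def MuDvd (μ : Polynomial K → WithTop Λ) (h g : Polynomial K) : Prop :=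
  ∃ c, MuEquiv μ (h * c) g

/-- `g` is `μ`-minimal: `g ∤_μ f` for all nonzero `f` of degree smaller than `deg g`. -/
def MuMinimal (μ : Polynomial K → WithTop Λ) (g : Polynomial K) : Prop :=
  ∀ f : Polynomial K, f ≠ 0 → f.degree < g.degree → ¬ MuDvd μ g f

/-- `g` is `μ`-irreducible: the principal ideal of `G_μ` generated by the initial term of `g`
is a nonzero prime ideal. -/
def MuIrreducible (μ : Polynomial K → WithTop Λ) (g : Polynomial K) : Prop :=
  μ g ≠ ⊤ ∧ ¬ MuDvd μ g 1 ∧ ∀ a b : Polynomial K, MuDvd μ g (a * b) → MuDvd μ g a ∨ MuDvd μ g b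

/-- A (MacLane–Vaquié) key polynomial for `μ`: monic, `μ`-minimal and `μ`-irreducible. -/
def IsKeyPol (μ : Polynomial K → WithTop Λ) (φ : Polynomial K) : Prop :=
  φ.Monic ∧ MuMinimal μ φ ∧ MuIrreducible μ φ

/-- A key polynomial for `μ` of minimal degree. -/
def MinKeyPol (μ : Polynomial K → WithTop Λ) (φ : Polynomial K) : Prop :=
  IsKeyPol μ φ ∧ ∀ ψ : Polynomial K, IsKeyPol μ ψ → φ.degree ≤ ψ.degree

/-- The coefficients of the `g`-adic expansion `f = ∑ a_s g^s`, `deg a_s < deg g`. -/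
noncomputable def adicCoeff (g : Polynomial K) : Polynomial K → ℕ → Polynomial K
  | f, 0 => f %ₘ g
  | f, (s + 1) => adicCoeff g (f /ₘ g) s

/-- The truncation `μ_g` of `μ` : `μ_g (∑ a_s g^s) = min_s μ (a_s g^s)`. -/
noncomputable def truncVal (μ : Polynomial K → WithTop Λ) (g f : Polynomial K) : WithTop Λ :=
  (Finset.range (f.natDegree + 1)).inf fun s => μ (adicCoeff g f s * g ^ s)

/-- The augmented valuation `[μ; φ, γ]`, acting on `φ`-expansions by
`ν(∑ a_s φ^s) = min_s (μ(a_s) + s γ)`. -/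
noncomputable def augVal (μ : Polynomial K → WithTop Λ) (φ : Polynomial K) (γ : WithTop Λ)
    (f : Polynomial K) : WithTop Λ :=
  (Finset.range (f.natDegree + 1)).inf fun s => μ (adicCoeff φ f s) + s • γ

end Preamble

/-- every key polynomial of a valuation `μ` on `K[x]` extending `v`
is irreducible in `K[x]`. -/
theorem keyPol_irreducible {K : Type*} [Field K] {Λ : Type*}
    [AddCommGroup Λ] [LinearOrder Λ] [IsOrderedAddMonoid Λ] (v : K → WithTop Λ) (hv : IsVal v)
    (μ : Polynomial K → WithTop Λ) (hμ : IsVal μ) (hext : ExtendsVal v μ)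
    (φ : Polynomial K) (hφ : IsKeyPol μ φ) : Irreducible φ := by
  obtain ⟨hmonic, hmin, hne, hnd1, hprime⟩ := hφ
  obtain ⟨hμ0, hμ1, hμmul, hμadd⟩ := hμ
  -- μ-divisibility of f by φ when μ f ≠ ⊤ and f = φ * c
  have selfdvd : ∀ f : Polynomial K, μ f ≠ ⊤ → MuDvd μ φ (φ * f) := by
    intro f hf
    refine ⟨f, Or.inl ⟨rfl, ?_⟩⟩
    rw [sub_self, hμ0, hμmul, lt_top_iff_ne_top]
    intro h
    rcases WithTop.add_eq_top.mp h with h | h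
    · exact hne h
    · exact hf h
  constructor
  · intro hu
    have hdeg : φ.degree = 0 := degree_eq_zero_of_isUnit hu
    have : φ = 1 := by
      have := hmonic.degree_le_zero_iff_eq_one.mp (le_of_eq hdeg)
      exact this
    apply hnd1
    have h1 := selfdvd 1 (by rw [hμ1]; exact WithTop.zero_ne_top)
    rw [mul_one] at h1
    rw [this] at h1 ⊢
    exact h1
  · intro a b hab
    have hφ0 : φ ≠ 0 := by intro h; exact hne (h ▸ hμ0)
    have hμab : μ (a * b) ≠ ⊤ := by rw [← hab]; exact hne
    have ha0 : a ≠ 0 := by rintro rfl; simp [hμ0] at hμab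
    have hb0 : b ≠ 0 := by rintro rfl; simp [hμ0] at hμab
    have hdvd : MuDvd μ φ (a * b) := by
      have := selfdvd 1 (by rw [hμ1]; exact WithTop.zero_ne_top)
      rw [mul_one] at this; rw [← hab]; exact this
    have hdegsum : φ.degree = a.degree + b.degree := by
      rw [hab, degree_mul]
    rcases hprime a b hdvd with h | h
    · -- φ ∣_μ a, so by minimality deg a ≥ deg φ, hence deg b = 0
      have hda : ¬ a.degree < φ.degree := fun hlt => hmin a ha0 hlt h
      have hbd : b.degree ≤ 0 := by
        by_contra hc
        push_neg at hc
        apply hda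
        rw [hdegsum]
        calc a.degree = a.degree + 0 := by simp
          _ < a.degree + b.degree := by
              exact WithBot.add_lt_add_left (degree_ne_bot.mpr ha0) hc
      right
      rw [eq_C_of_degree_le_zero hbd]
      exact isUnit_C.mpr (isUnit_iff_ne_zero.mpr (fun h0 => hb0 (by
        rw [eq_C_of_degree_le_zero hbd, h0, map_zero])))
    · have hdb : ¬ b.degree < φ.degree := fun hlt => hmin b hb0 hlt h
      have had : a.degree ≤ 0 := by
        by_contra hc
        push_neg at hc
        apply hdb
        rw [hdegsum, add_comm]
        calc b.degree = b.degree + 0 := by simp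
          _ < b.degree + a.degree := by
              exact WithBot.add_lt_add_left (degree_ne_bot.mpr hb0) hc
      left
      rw [eq_C_of_degree_le_zero had]
      exact isUnit_C.mpr (isUnit_iff_ne_zero.mpr (fun h0 => ha0 (by
        rw [eq_C_of_degree_le_zero had, h0, map_zero])))
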